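/- If H is a corona graph (a graph obtained from some graph F by attaching at least one pendant edge to every vertex of F), then S_2(H), the double subdivision of H, is a minimal DPDP-graph. -/

import Mathlib

open SimpleGraph

variable {V : Type*}

/-- `D` is a dominating set of `G`. -/
def Dominating (G : SimpleGraph V) (D : Set V) : Prop :=
  ∀ v ∉ D, ∃ u ∈ D, G.Adj v u

/-- `P` is a paired-dominating set of `G`: it is dominating and the induced
subgraph `G[P]` contains a perfect matching (given by an involutive pairing of
the vertices of `P` along edges inside `P`). -/
def PairedDominating (G : SimpleGraph V) (P : Set V) : Prop :=
  Dominating G P ∧ ∃ m : V → V, ∀ v ∈ P, m v ∈ P ∧ G.Adj v (m v) ∧ m (m v) = v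

/-- `(D, P)` is a DP-pair: a partition of the vertex set into a dominating set `D`
and a paired-dominating set `P`. -/
def IsDPPair (G : SimpleGraph V) (D P : Set V) : Prop :=
  Disjoint D P ∧ D ∪ P = Set.univ ∧ Dominating G D ∧ PairedDominating G P

/-- `G` is a DPDP-graph: its vertex set partitions into a dominating set and a
paired-dominating set. -/
def IsDPDP (G : SimpleGraph V) : Prop := ∃ D P, IsDPPair G D P

/-- A minimal DPDP-graph: a DPDP-graph no proper spanning subgraph of which is DPDP. -/
def IsMinimalDPDP (G : SimpleGraph V) : Prop :=
  IsDPDP G ∧ ∀ G' : SimpleGraph V, G' < G → ¬ IsDPDP G'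

/-- A leaf is a vertex of degree 1. -/
def IsLeaf (G : SimpleGraph V) (v : V) : Prop := (G.neighborSet v).ncard = 1

/-- A support vertex is a vertex adjacent to at least one leaf. -/
def IsSupport (G : SimpleGraph V) (v : V) : Prop := ∃ u, G.Adj v u ∧ IsLeaf G u

/-- The double subdivision of `H`: each edge `uv` of `H` is replaced by a path
`u, u_e, v_e, v` with two new internal vertices. The new vertex adjacent to `u`
on the edge `uv` is encoded as `Sum.inr ⟨(u, v), _⟩`. -/
def S2 (H : SimpleGraph V) : SimpleGraph (V ⊕ {e : V × V // H.Adj e.1 e.2}) where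
  Adj x y :=
    match x, y with
    | Sum.inl u, Sum.inr e => u = e.1.1
    | Sum.inr e, Sum.inl u => u = e.1.1
    | Sum.inr e, Sum.inr f => e.1.1 = f.1.2 ∧ e.1.2 = f.1.1
    | _, _ => False
  symm := by
    constructor
    rintro (u | e) (w | f) h <;> simp_all
  loopless := by
    constructor
    rintro (u | e) h
    · exact h
    · exact H.irrefl (h.1 ▸ e.2)


section Aux

variable {V : Type*}

/-- Swap the orientation of an arc. -/
def swapArc {H : SimpleGraph V} (e : {e : V × V // H.Adj e.1 e.2}) :
    {e : V × V // H.Adj e.1 e.2} := ⟨(e.1.2, e.1.1), e.2.symm⟩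

lemma swap_swap {H : SimpleGraph V} (e : {e : V × V // H.Adj e.1 e.2}) :
    swapArc (swapArc e) = e := rfl

lemma adj_inr {H : SimpleGraph V} {e : {e : V × V // H.Adj e.1 e.2}}
    {x : V ⊕ {e : V × V // H.Adj e.1 e.2}} (h : (S2 H).Adj (Sum.inr e) x) :
    x = Sum.inl e.1.1 ∨ x = Sum.inr (swapArc e) := by
  rcases x with u | f
  · left
    have hu : u = e.1.1 := h
    rw [hu]
  · right
    have h' : e.1.1 = f.1.2 ∧ e.1.2 = f.1.1 := h
    exact congrArg Sum.inr (Subtype.ext (Prod.ext_iff.mpr ⟨h'.2.symm, h'.1.symm⟩))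

lemma adj_inl {H : SimpleGraph V} {u : V}
    {x : V ⊕ {e : V × V // H.Adj e.1 e.2}} (h : (S2 H).Adj (Sum.inl u) x) :
    ∃ e, x = Sum.inr e ∧ e.1.1 = u := by
  rcases x with w | f
  · exact absurd h (by simp [S2])
  · have hu : u = f.1.1 := h
    exact ⟨f, rfl, hu.symm⟩

lemma leaf_unique {H : SimpleGraph V} {u w w' : V} (hu : IsLeaf H u)
    (h1 : H.Adj u w) (h2 : H.Adj u w') : w = w' := by
  obtain ⟨a, ha⟩ := Set.ncard_eq_one.mp hu
  have hw : w ∈ H.neighborSet u := h1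
  have hw' : w' ∈ H.neighborSet u := h2
  rw [ha] at hw hw'
  simp only [Set.mem_singleton_iff] at hw hw'
  rw [hw, hw']

end Aux

/-- If `H` is a corona graph — obtained from some graph by attaching at least one
pendant edge to every vertex, so that every vertex of `H` is a leaf or a support
vertex — then its double subdivision `S₂(H)` is a minimal DPDP-graph. -/
theorem stmt17 {V : Type*} [Fintype V] (H : SimpleGraph V)
    (hcorona : ∀ v : V, IsLeaf H v ∨ IsSupport H v) :
    IsMinimalDPDP (S2 H) := by
  have hA0 : ∀ u : V, ∃ w, H.Adj u w := by
    intro u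
    rcases hcorona u with h | h
    · obtain ⟨a, ha⟩ := Set.ncard_eq_one.mp h
      refine ⟨a, ?_⟩
      have hmem : a ∈ H.neighborSet u := by rw [ha]; exact rfl
      exact hmem
    · obtain ⟨w, hw, _⟩ := h
      exact ⟨w, hw⟩
  constructor
  · -- existence of a DP-pair
    refine ⟨Set.range Sum.inl, Set.range Sum.inr, ?_, ?_, ?_, ?_, ?_⟩
    · rw [Set.disjoint_left]
      rintro _ ⟨u, rfl⟩ ⟨e, he⟩
      exact Sum.inl_ne_inr he.symm
    · ext x; rcases x with u | e <;> simp
    · rintro (u | e) hv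
      · exact absurd ⟨u, rfl⟩ hv
      · exact ⟨Sum.inl e.1.1, ⟨e.1.1, rfl⟩, rfl⟩
    · rintro (u | e) hv
      · obtain ⟨w, hw⟩ := hA0 u
        exact ⟨Sum.inr ⟨(u, w), hw⟩, ⟨_, rfl⟩, rfl⟩
      · exact absurd ⟨e, rfl⟩ hv
    · refine ⟨fun x => match x with
        | Sum.inl u => Sum.inl u
        | Sum.inr e => Sum.inr (swapArc e), ?_⟩
      rintro _ ⟨e, rfl⟩
      exact ⟨⟨swapArc e, rfl⟩, ⟨rfl, rfl⟩, rfl⟩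
  · -- minimality
    rintro G' hlt ⟨D, P, hdisj, huniv, hD, hPdom, m, hm⟩
    have hle : G' ≤ S2 H := hlt.le
    have memDP : ∀ x, x ∈ D ∨ x ∈ P := by
      intro x
      have : x ∈ D ∪ P := huniv ▸ Set.mem_univ x
      exact this
    have notboth : ∀ x, x ∈ D → x ∈ P → False := fun x hx hp =>
      Set.disjoint_left.mp hdisj hx hp
    -- every leaf of H is in D
    have leafD : ∀ u, IsLeaf H u → Sum.inl u ∈ D := by
      intro u hu
      rcases memDP (Sum.inl u) with h | h
      · exact h
      exfalso
      obtain ⟨hmP, hmadj, _⟩ := hm _ h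
      obtain ⟨d, hdD, hdadj⟩ := hD (Sum.inl u) (fun hd => notboth _ hd h)
      obtain ⟨e, he, he1⟩ := adj_inl (hle hmadj)
      obtain ⟨f, hf, hf1⟩ := adj_inl (hle hdadj)
      have hef : e = f := by
        apply Subtype.ext
        apply Prod.ext_iff.mpr
        refine ⟨he1.trans hf1.symm, ?_⟩
        exact leaf_unique hu (by rw [← he1]; exact e.2) (by rw [← hf1]; exact f.2)
      rw [he] at hmP
      rw [hf] at hdD
      rw [hef] at hmP
      exact notboth _ hdD hmP
    -- every support vertex of H is in D
    have suppD : ∀ u, IsSupport H u → Sum.inl u ∈ D := by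
      rintro u ⟨l, hul, hl⟩
      have hlD := leafD l hl
      obtain ⟨p, hpP, hpadj⟩ := hPdom (Sum.inl l) (fun hp => notboth _ hlD hp)
      obtain ⟨e, hp, he1⟩ := adj_inl (hle hpadj)
      rw [hp] at hpP
      have he2 : e.1.2 = u :=
        leaf_unique hl (by rw [← he1]; exact e.2) hul.symm
      obtain ⟨hmP, hmadj, _⟩ := hm _ hpP
      rcases adj_inr (hle hmadj) with h | h
      · rw [h, he1] at hmP
        exact absurd hmP (fun hp' => notboth _ hlD hp')
      · rw [h] at hmP
        obtain ⟨d, hdD, hdadj⟩ := hD (Sum.inr (swapArc e)) (fun hd => notboth _ hd hmP)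
        rcases adj_inr (hle hdadj) with h' | h'
        · rw [h'] at hdD
          have : (swapArc e).1.1 = e.1.2 := rfl
          rw [this, he2] at hdD
          exact hdD
        · rw [h', swap_swap] at hdD
          exact absurd hpP (fun hp' => notboth _ hdD hp')
    have hA : ∀ u : V, Sum.inl u ∈ D := fun u =>
      (hcorona u).elim (leafD u) (suppD u)
    -- every subdivision vertex is in P
    have hBP : ∀ e : {e : V × V // H.Adj e.1 e.2}, Sum.inr e ∈ P := by
      intro e
      rcases memDP (Sum.inr e) with h | h
      · exfalso
        obtain ⟨p, hpP, hpadj⟩ := hPdom _ (fun hp => notboth _ h hp)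
        rcases adj_inr (hle hpadj) with rfl | rfl
        · exact notboth _ (hA e.1.1) hpP
        · obtain ⟨hmP, hmadj, _⟩ := hm _ hpP
          rcases adj_inr (hle hmadj) with h2 | h2
          · rw [h2] at hmP
            exact notboth _ (hA _) hmP
          · rw [h2, swap_swap] at hmP
            exact notboth _ h hmP
      · exact h
    -- all edges of S2 H are forced into G'
    have hedge1 : ∀ e : {e : V × V // H.Adj e.1 e.2},
        G'.Adj (Sum.inr e) (Sum.inl e.1.1) := by
      intro e
      obtain ⟨d, hdD, hdadj⟩ := hD (Sum.inr e) (fun hd => notboth _ hd (hBP e))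
      rcases adj_inr (hle hdadj) with rfl | rfl
      · exact hdadj
      · exact absurd hdD (fun hd => notboth _ hd (hBP _))
    have hedge2 : ∀ e : {e : V × V // H.Adj e.1 e.2},
        G'.Adj (Sum.inr e) (Sum.inr (swapArc e)) := by
      intro e
      obtain ⟨hmP, hmadj, _⟩ := hm _ (hBP e)
      rcases adj_inr (hle hmadj) with h | h
      · rw [h] at hmP
        exact absurd hmP (fun hp => notboth _ (hA _) hp)
      · rw [h] at hmadj
        exact hmadj
    have hge : S2 H ≤ G' := by
      rintro (u | e) (w | f) hxy
      · exact absurd hxy (by simp [S2])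
      · have hu : u = f.1.1 := hxy
        rw [hu]
        exact (hedge1 f).symm
      · have hw : w = e.1.1 := hxy
        rw [hw]
        exact hedge1 e
      · have h' : e.1.1 = f.1.2 ∧ e.1.2 = f.1.1 := hxy
        have hf : f = swapArc e := Subtype.ext (Prod.ext_iff.mpr ⟨h'.2.symm, h'.1.symm⟩)
        rw [hf]
        exact hedge2 e
    exact absurd hge hlt.not_ge
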